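/- Let B be a finite left regular band and (G, Δ) a presheaf of finite groups on B, and let S = Σ_{x ∈ B} G x be endowed with the multiplication ⟨x,s⟩·⟨y,t⟩ := ⟨x·y, (Δ x (x·y) s)·(Δ y (x·y) t)⟩. Then S is a strict left regular band of groups: (a) this multiplication is associative; (b) for each a = ⟨x,s⟩ ∈ S the element ω a := ⟨x, 1_{G x}⟩ is idempotent and equals a^n for some n ≥ 1; (c) (ω a)·a = a for all a ∈ S; (d) a·b·(ω a) = a·b for all a, b ∈ S; and (e) ω(a·b) = (ω a)·(ω b) for all a, b ∈ S. -/
import Mathlib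


/-- Given a presheaf of finite groups `(G, Δ)` on a finite left regular
band `B`, the sigma type `S = Σ x, G x` with the multiplication
`⟨x,s⟩·⟨y,t⟩ = ⟨x·y, Δ x (x·y) s · Δ y (x·y) t⟩` is a strict left regular band of groups,
with idempotent-power map `ω⟨x,s⟩ = ⟨x, 1⟩`. -/
theorem presheaf_of_groups_gives_strict_lrbg {B : Type*} [Semigroup B] [Fintype B]
    (lrb1 : ∀ x : B, x * x = x)
    (lrb2 : ∀ x y : B, x * y * x = x * y)
    (G : B → Type*) [∀ x, Group (G x)] [∀ x, Fintype (G x)]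
    (Δ : ∀ x y : B, y * x = y → (G x →* G y))
    (Δid : ∀ (x : B) (h : x * x = x), Δ x x h = MonoidHom.id (G x))
    (Δcomp : ∀ (x y z : B) (hxy : y * x = y) (hyz : z * y = z) (hxz : z * x = z),
      (Δ y z hyz).comp (Δ x y hxy) = Δ x z hxz)
    (m : (Σ x : B, G x) → (Σ x : B, G x) → (Σ x : B, G x))
    (hm : ∀ (x y : B) (s : G x) (t : G y),
      m ⟨x, s⟩ ⟨y, t⟩ =
        ⟨x * y, Δ x (x * y) (lrb2 x y) s *
                Δ y (x * y) (by rw [mul_assoc, lrb1 y]) t⟩)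
    (om : (Σ x : B, G x) → (Σ x : B, G x))
    (hom : ∀ (x : B) (s : G x), om ⟨x, s⟩ = ⟨x, 1⟩) :
    (∀ a b c : Σ x : B, G x, m (m a b) c = m a (m b c)) ∧
    (∀ a : Σ x : B, G x, m (om a) (om a) = om a) ∧
    (∀ a : Σ x : B, G x, ∃ n : ℕ, om a = (fun b => m b a)^[n] a) ∧
    (∀ a : Σ x : B, G x, m (om a) a = a) ∧
    (∀ a b : Σ x : B, G x, m (m a b) (om a) = m a b) ∧
    (∀ a b : Σ x : B, G x, om (m a b) = m (om a) (om b)) := by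
  -- basic order facts
  have le2 : ∀ x y : B, (x * y) * y = x * y := fun x y => by rw [mul_assoc, lrb1]
  have le_trans : ∀ x y z : B, y * x = y → z * y = z → z * x = z := by
    intro x y z h1 h2
    calc z * x = z * y * x := by rw [h2]
    _ = z * (y * x) := mul_assoc _ _ _
    _ = z * y := by rw [h1]
    _ = z := h2
  -- pointwise composition
  have Δc : ∀ (x y z : B) (hxy : y * x = y) (hyz : z * y = z) (hxz : z * x = z) (s : G x),
      Δ y z hyz (Δ x y hxy s) = Δ x z hxz s := by
    intro x y z hxy hyz hxz s
    rw [← Δcomp x y z hxy hyz hxz]; rfl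
  -- sigma equality via HEq
  have hsig : ∀ (p q : B) (v : G p) (w : G q), p = q → HEq v w →
      (⟨p, v⟩ : Σ x : B, G x) = ⟨q, w⟩ := by
    rintro p q v w rfl h
    rw [eq_of_heq h]
  have hmulh : ∀ (p q : B), p = q → ∀ (a b : G p) (c d : G q), HEq a c → HEq b d →
      HEq (a * b) (c * d) := by
    rintro p q rfl a b c d ha hb
    rw [eq_of_heq ha, eq_of_heq hb]
  have hΔh : ∀ (x p q : B) (hp : p * x = p) (hq : q * x = q) (s : G x), p = q →
      HEq (Δ x p hp s) (Δ x q hq s) := by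
    rintro x p q hp hq s rfl; rfl
  have hidh : ∀ (p q : B), q = p → ∀ (h : q * p = q) (v : G p), HEq (Δ p q h v) v := by
    rintro p q rfl h v
    rw [Δid]; rfl
  -- same-base multiplication
  have mstep : ∀ (x : B) (v s : G x), m ⟨x, v⟩ ⟨x, s⟩ = ⟨x, v * s⟩ := by
    intro x v s
    rw [hm]
    exact hsig _ _ _ _ (lrb1 x)
      (hmulh _ _ (lrb1 x) _ _ _ _ (hidh x (x * x) (lrb1 x) _ v) (hidh x (x * x) (lrb1 x) _ s))
  refine ⟨?_, ?_, ?_, ?_, ?_, ?_⟩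
  · -- associativity
    rintro ⟨x, s⟩ ⟨y, t⟩ ⟨z, u⟩
    rw [hm x y s t, hm y z t u, hm (x * y) z _ u, hm x (y * z) s _]
    have hxP : (x * y * z) * x = x * y * z := le_trans x (x * y) (x * y * z) (lrb2 x y) (lrb2 (x*y) z)
    have hyP : (x * y * z) * y = x * y * z := le_trans y (x * y) (x * y * z) (le2 x y) (lrb2 (x*y) z)
    have hzP : (x * y * z) * z = x * y * z := le2 (x*y) z
    have hxQ : (x * (y * z)) * x = x * (y * z) := lrb2 x (y*z)
    have hyQ : (x * (y * z)) * y = x * (y * z) := le_trans y (y * z) (x * (y*z)) (lrb2 y z) (le2 x (y*z))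
    have hzQ : (x * (y * z)) * z = x * (y * z) := le_trans z (y * z) (x * (y*z)) (le2 y z) (le2 x (y*z))
    apply hsig _ _ _ _ (mul_assoc x y z)
    rw [map_mul, map_mul,
      Δc x (x*y) (x*y*z) (lrb2 x y) _ hxP s,
      Δc y (x*y) (x*y*z) _ _ hyP t,
      Δc y (y*z) (x*(y*z)) (lrb2 y z) _ hyQ t,
      Δc z (y*z) (x*(y*z)) _ _ hzQ u,
      mul_assoc (Δ x (x*y*z) hxP s)]
    exact hmulh _ _ (mul_assoc x y z) _ _ _ _
      (hΔh x _ _ hxP hxQ s (mul_assoc x y z))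
      (hmulh _ _ (mul_assoc x y z) _ _ _ _
        (hΔh y _ _ hyP hyQ t (mul_assoc x y z))
        (hΔh z _ _ hzP hzQ u (mul_assoc x y z)))
  · -- omega idempotent
    rintro ⟨x, s⟩
    rw [hom, mstep, mul_one]
  · -- omega is a power
    rintro ⟨x, s⟩
    have iter : ∀ n : ℕ, (fun b => m b (⟨x, s⟩ : Σ x : B, G x))^[n] ⟨x, s⟩ = ⟨x, s ^ (n + 1)⟩ := by
      intro n
      induction n with
      | zero => simp [pow_one]
      | succ k ih =>
        rw [Function.iterate_succ_apply', ih]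
        show m ⟨x, s ^ (k + 1)⟩ ⟨x, s⟩ = _
        rw [mstep, ← pow_succ]
    refine ⟨orderOf s - 1, ?_⟩
    rw [iter, hom]
    have hpos : 1 ≤ orderOf s := orderOf_pos s
    rw [Nat.sub_add_cancel hpos, pow_orderOf_eq_one]
  · -- omega a * a = a
    rintro ⟨x, s⟩
    rw [hom, mstep, one_mul]
  · -- a * b * omega a = a * b
    rintro ⟨x, s⟩ ⟨y, t⟩
    rw [hom x s, hm x y s t, hm (x * y) x _ 1, map_one, mul_one]
    exact hsig _ _ _ _ (lrb2 x y) (hidh (x * y) ((x * y) * x) (lrb2 x y) _ _)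
  · -- omega (a*b) = omega a * omega b
    rintro ⟨x, s⟩ ⟨y, t⟩
    rw [hm x y s t, hom (x * y), hom x s, hom y t, hm x y 1 1, map_one, map_one, mul_one]
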